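/- The group G₂₅ acts transitively on the set of its 12 reflection planes: for any two planes W₁, W₂ among the 2-dimensional subspaces of ℂ³ defined by the equations x = 0, y = 0, z = 0, and x + ξy + ξ′z = 0 (where ξ, ξ′ range over the cube roots of unity), there exists g ∈ G₂₅ with g·W₁ = W₂ (image subspace). -/
import Mathlib

noncomputable section

namespace Stmt12

set_option maxHeartbeats 2000000

/-- `ω = e^{2πi/3}`. -/
def ω : ℂ := Complex.exp (2 * Real.pi * Complex.I / 3)

/-- The generators of the Shephard–Todd group `G₂₅`. -/
def R₁ : Matrix (Fin 3) (Fin 3) ℂ := Matrix.diagonal ![1, 1, ω ^ 2]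
def R₂ : Matrix (Fin 3) (Fin 3) ℂ :=
  ((ω ^ 2 - ω) / 3) • !![ω, ω ^ 2, ω ^ 2; ω ^ 2, ω, ω ^ 2; ω ^ 2, ω ^ 2, ω]
def R₃ : Matrix (Fin 3) (Fin 3) ℂ := Matrix.diagonal ![1, ω ^ 2, 1]

/-- The Shephard–Todd group `G₂₅ ≤ GL₃(ℂ)` generated by `R₁, R₂, R₃`. -/
def G25 : Subgroup (Matrix (Fin 3) (Fin 3) ℂ)ˣ :=
  Subgroup.closure {g | (g : Matrix (Fin 3) (Fin 3) ℂ) = R₁ ∨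
    (g : Matrix (Fin 3) (Fin 3) ℂ) = R₂ ∨ (g : Matrix (Fin 3) (Fin 3) ℂ) = R₃}

/-- The plane of `ℂ³` with equation `c₀·x + c₁·y + c₂·z = 0`. -/
def plane (c : Fin 3 → ℂ) : Submodule ℂ (Fin 3 → ℂ) :=
  LinearMap.ker (∑ i, c i • (LinearMap.proj i : (Fin 3 → ℂ) →ₗ[ℂ] ℂ))

/-- The 12 reflection planes of `G₂₅`: `x = 0`, `y = 0`, `z = 0` and
`x + ξy + ξ′z = 0` with `ξ, ξ′` cube roots of unity. -/
def ReflPlanes : Set (Submodule ℂ (Fin 3 → ℂ)) :=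
  {W | W = plane ![1, 0, 0] ∨ W = plane ![0, 1, 0] ∨ W = plane ![0, 0, 1] ∨
    ∃ ξ ξ' : ℂ, ξ ^ 3 = 1 ∧ ξ' ^ 3 = 1 ∧ W = plane ![1, ξ, ξ']}

/- ### Basic facts about ω -/

lemma hω3 : ω ^ 3 = 1 := by
  have h : ((3 : ℕ) : ℂ) * (2 * Real.pi * Complex.I / 3) = 2 * Real.pi * Complex.I := by
    push_cast; ring
  rw [ω, ← Complex.exp_nat_mul, h, Complex.exp_two_pi_mul_I]

lemma hω1 : ω ≠ 1 := by
  intro hcon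
  rw [ω, Complex.exp_eq_one_iff] at hcon
  obtain ⟨n, hn⟩ := hcon
  have h2 : (2 * (Real.pi : ℂ) * Complex.I) ≠ 0 := by
    simp [Real.pi_ne_zero, Complex.I_ne_zero]
  have hb : ((n : ℂ) - 1/3) * (2 * (Real.pi : ℂ) * Complex.I) = 0 := by
    linear_combination (-1 : ℂ) * hn
  rcases mul_eq_zero.mp hb with h | h
  · have h4 : ((3 * n : ℤ) : ℂ) = ((1 : ℤ) : ℂ) := by
      push_cast
      linear_combination 3 * h
    have := Int.cast_injective h4
    omega
  · exact h2 h

lemma hω0 : ω ≠ 0 := by rw [ω]; exact Complex.exp_ne_zero _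

lemma hω : ω ^ 2 + ω + 1 = 0 := by
  have h : (ω - 1) * (ω ^ 2 + ω + 1) = 0 := by linear_combination hω3
  rcases mul_eq_zero.mp h with h | h
  · exact absurd (sub_eq_zero.mp h) hω1
  · exact h

lemma hsub : ω ^ 2 - ω ≠ 0 := by
  intro h
  apply hω1
  have h2 : ω * (ω - 1) = 0 := by linear_combination h
  rcases mul_eq_zero.mp h2 with h3 | h3
  · exact absurd h3 hω0
  · exact sub_eq_zero.mp h3

lemma cube_roots (ξ : ℂ) (h : ξ ^ 3 = 1) : ξ = 1 ∨ ξ = ω ∨ ξ = ω ^ 2 := by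
  have hz : (ξ - 1) * ((ξ - ω) * (ξ - ω ^ 2)) = 0 := by
    linear_combination h + (ξ - ξ ^ 2) * hω + (ξ - 1) * hω3
  rcases mul_eq_zero.mp hz with h1 | h1
  · exact Or.inl (sub_eq_zero.mp h1)
  · rcases mul_eq_zero.mp h1 with h2 | h2
    · exact Or.inr (Or.inl (sub_eq_zero.mp h2))
    · exact Or.inr (Or.inr (sub_eq_zero.mp h2))

/- ### The generators as units -/


lemma hR₁e : R₁ = !![1, 0, 0; 0, 1, 0; 0, 0, ω ^ 2] := by
  ext i j; fin_cases i <;> fin_cases j <;> simp [R₁, Matrix.diagonal, Matrix.vecHead, Matrix.vecTail]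
lemma hR₃e : R₃ = !![1, 0, 0; 0, ω ^ 2, 0; 0, 0, 1] := by
  ext i j; fin_cases i <;> fin_cases j <;> simp [R₃, Matrix.diagonal, Matrix.vecHead, Matrix.vecTail]
lemma hR₂e : R₂ = !![(ω ^ 2 - ω) / 3 * ω, (ω ^ 2 - ω) / 3 * ω ^ 2, (ω ^ 2 - ω) / 3 * ω ^ 2;
    (ω ^ 2 - ω) / 3 * ω ^ 2, (ω ^ 2 - ω) / 3 * ω, (ω ^ 2 - ω) / 3 * ω ^ 2;
    (ω ^ 2 - ω) / 3 * ω ^ 2, (ω ^ 2 - ω) / 3 * ω ^ 2, (ω ^ 2 - ω) / 3 * ω] := by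
  ext i j; fin_cases i <;> fin_cases j <;> simp [R₂, Matrix.vecHead, Matrix.vecTail]

lemma vecMul_eta (a₁ a₂ a₃ b₁ b₂ b₃ c₁ c₂ c₃ x y z : ℂ) :
    Matrix.vecMul ![x, y, z] !![a₁, a₂, a₃; b₁, b₂, b₃; c₁, c₂, c₃] =
      ![x * a₁ + y * b₁ + z * c₁, x * a₂ + y * b₂ + z * c₂, x * a₃ + y * b₃ + z * c₃] := by
  funext j
  fin_cases j <;> simp [Matrix.vecMul, dotProduct, Fin.sum_univ_three, Matrix.vecHead, Matrix.vecTail]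

def u₁ : (Matrix (Fin 3) (Fin 3) ℂ)ˣ :=
  ⟨R₁, Matrix.diagonal ![1, 1, ω], by
    have h : (fun i => (![1, 1, ω ^ 2] : Fin 3 → ℂ) i * ![1, 1, ω] i) = 1 := by
      funext i; fin_cases i <;> simp <;> linear_combination hω3
    rw [R₁, Matrix.diagonal_mul_diagonal, h]; exact Matrix.diagonal_one, by
    have h : (fun i => (![1, 1, ω] : Fin 3 → ℂ) i * ![1, 1, ω ^ 2] i) = 1 := by
      funext i; fin_cases i <;> simp <;> linear_combination hω3
    rw [R₁, Matrix.diagonal_mul_diagonal, h]; exact Matrix.diagonal_one⟩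

def u₃ : (Matrix (Fin 3) (Fin 3) ℂ)ˣ :=
  ⟨R₃, Matrix.diagonal ![1, ω, 1], by
    have h : (fun i => (![1, ω ^ 2, 1] : Fin 3 → ℂ) i * ![1, ω, 1] i) = 1 := by
      funext i; fin_cases i <;> simp <;> linear_combination hω3
    rw [R₃, Matrix.diagonal_mul_diagonal, h]; exact Matrix.diagonal_one, by
    have h : (fun i => (![1, ω, 1] : Fin 3 → ℂ) i * ![1, ω ^ 2, 1] i) = 1 := by
      funext i; fin_cases i <;> simp <;> linear_combination hω3
    rw [R₃, Matrix.diagonal_mul_diagonal, h]; exact Matrix.diagonal_one⟩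

def u₂ : (Matrix (Fin 3) (Fin 3) ℂ)ˣ :=
  ⟨R₂, R₂ * R₂, by
    rw [hR₂e, Matrix.mul_fin_three, Matrix.mul_fin_three, Matrix.one_fin_three]
    ext i j
    fin_cases i <;> fin_cases j <;> simp [Matrix.vecHead, Matrix.vecTail, -mul_eq_mul_right_iff, -mul_eq_mul_left_iff] <;>
      first
        | linear_combination ((-1) + (1) * ω + (-1) * ω ^ 3 + (1) * ω ^ 4 + (-28/27) * ω ^ 6 + (31/27) * ω ^ 7 + (-4/9) * ω ^ 8 + (-2/27) * ω ^ 9 + (2/27) * ω ^ 10) * hω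
        | linear_combination ((-1/9) * ω ^ 7 + (1/3) * ω ^ 8 + (-1/3) * ω ^ 9 + (1/9) * ω ^ 10) * hω
        | linear_combination (-1 : ℂ) * ((-1) + (1) * ω + (-1) * ω ^ 3 + (1) * ω ^ 4 + (-28/27) * ω ^ 6 + (31/27) * ω ^ 7 + (-4/9) * ω ^ 8 + (-2/27) * ω ^ 9 + (2/27) * ω ^ 10) * hω
        | linear_combination (-1 : ℂ) * ((-1/9) * ω ^ 7 + (1/3) * ω ^ 8 + (-1/3) * ω ^ 9 + (1/9) * ω ^ 10) * hω, by
    rw [hR₂e, Matrix.mul_fin_three, Matrix.mul_fin_three, Matrix.one_fin_three]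
    ext i j
    fin_cases i <;> fin_cases j <;> simp [Matrix.vecHead, Matrix.vecTail, -mul_eq_mul_right_iff, -mul_eq_mul_left_iff] <;>
      first
        | linear_combination ((-1) + (1) * ω + (-1) * ω ^ 3 + (1) * ω ^ 4 + (-28/27) * ω ^ 6 + (31/27) * ω ^ 7 + (-4/9) * ω ^ 8 + (-2/27) * ω ^ 9 + (2/27) * ω ^ 10) * hω
        | linear_combination ((-1/9) * ω ^ 7 + (1/3) * ω ^ 8 + (-1/3) * ω ^ 9 + (1/9) * ω ^ 10) * hω
        | linear_combination (-1 : ℂ) * ((-1) + (1) * ω + (-1) * ω ^ 3 + (1) * ω ^ 4 + (-28/27) * ω ^ 6 + (31/27) * ω ^ 7 + (-4/9) * ω ^ 8 + (-2/27) * ω ^ 9 + (2/27) * ω ^ 10) * hω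
        | linear_combination (-1 : ℂ) * ((-1/9) * ω ^ 7 + (1/3) * ω ^ 8 + (-1/3) * ω ^ 9 + (1/9) * ω ^ 10) * hω⟩

lemma hu₁ : u₁ ∈ G25 := Subgroup.subset_closure (Or.inl (by rfl))
lemma hu₂ : u₂ ∈ G25 := Subgroup.subset_closure (Or.inr (Or.inl (by rfl)))
lemma hu₃ : u₃ ∈ G25 := Subgroup.subset_closure (Or.inr (Or.inr (by rfl)))


/- ### Planes -/

lemma mem_plane (c x : Fin 3 → ℂ) : x ∈ plane c ↔ dotProduct c x = 0 := by
  simp [plane, LinearMap.mem_ker, LinearMap.sum_apply, dotProduct,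
    Fin.sum_univ_three]

lemma plane_smul (k : ℂ) (hk : k ≠ 0) (c : Fin 3 → ℂ) : plane (k • c) = plane c := by
  ext x
  rw [mem_plane, mem_plane, smul_dotProduct, smul_eq_mul, mul_eq_zero]
  simp [hk]

lemma map_plane (u : (Matrix (Fin 3) (Fin 3) ℂ)ˣ) (c : Fin 3 → ℂ) :
    Submodule.map (Matrix.toLin' ((u⁻¹ : (Matrix (Fin 3) (Fin 3) ℂ)ˣ) :
      Matrix (Fin 3) (Fin 3) ℂ)) (plane c) = plane (Matrix.vecMul c (u : Matrix (Fin 3) (Fin 3) ℂ)) := by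
  have huu : ((u : Matrix (Fin 3) (Fin 3) ℂ) * ((u⁻¹ : (Matrix (Fin 3) (Fin 3) ℂ)ˣ) : Matrix (Fin 3) (Fin 3) ℂ)) = 1 := by
    rw [← Units.val_mul]; simp
  have huu' : (((u⁻¹ : (Matrix (Fin 3) (Fin 3) ℂ)ˣ) : Matrix (Fin 3) (Fin 3) ℂ) * (u : Matrix (Fin 3) (Fin 3) ℂ)) = 1 := by
    rw [← Units.val_mul]; simp
  ext x
  simp only [Submodule.mem_map, mem_plane, Matrix.toLin'_apply]
  constructor
  · rintro ⟨y, hy, rfl⟩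
    rw [Matrix.dotProduct_mulVec, Matrix.vecMul_vecMul, huu, Matrix.vecMul_one]
    exact hy
  · intro hx
    refine ⟨Matrix.mulVec (u : Matrix (Fin 3) (Fin 3) ℂ) x, ?_, ?_⟩
    · rw [Matrix.dotProduct_mulVec]
      exact hx
    · rw [Matrix.mulVec_mulVec, huu', Matrix.one_mulVec]

/-- `W` is in the orbit of the plane `x = 0`. -/
def Good (W : Submodule ℂ (Fin 3 → ℂ)) : Prop :=
  ∃ g ∈ G25, Submodule.map (Matrix.toLin' ((g : (Matrix (Fin 3) (Fin 3) ℂ)ˣ) :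
    Matrix (Fin 3) (Fin 3) ℂ)) (plane ![1, 0, 0]) = W

lemma good_of (h : (Matrix (Fin 3) (Fin 3) ℂ)ˣ) (hh : h ∈ G25)
    (W : Submodule ℂ (Fin 3 → ℂ))
    (heq : plane (Matrix.vecMul ![1, 0, 0] (h : Matrix (Fin 3) (Fin 3) ℂ)) = W) :
    Good W :=
  ⟨h⁻¹, inv_mem hh, by rw [map_plane]; exact heq⟩

lemma good_base : Good (plane ![1, 0, 0]) :=
  ⟨1, one_mem _, by rw [Units.val_one, Matrix.toLin'_one, Submodule.map_id]⟩

lemma hk_ne : (ω ^ 2 - ω) / 3 * ω ≠ 0 :=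
  mul_ne_zero (div_ne_zero hsub (by norm_num)) hω0

lemma hk2_ne : (ω ^ 2 - ω) ^ 2 / 3 ≠ 0 :=
  div_ne_zero (pow_ne_zero 2 hsub) (by norm_num)

lemma good_e1 : Good (plane ![0, 1, 0]) := by
  apply good_of (u₂ * u₁ * u₂) (mul_mem (mul_mem hu₂ hu₁) hu₂)
  have hword : ((u₂ * u₁ * u₂ : (Matrix (Fin 3) (Fin 3) ℂ)ˣ) : Matrix (Fin 3) (Fin 3) ℂ) = R₂ * R₁ * R₂ := rfl
  have hv : Matrix.vecMul ![1, 0, 0] ((u₂ * u₁ * u₂ : (Matrix (Fin 3) (Fin 3) ℂ)ˣ) : Matrix (Fin 3) (Fin 3) ℂ)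
      = ((ω ^ 2 - ω) ^ 2 / 3) • ![0, 1, 0] := by
    rw [hword, hR₁e, hR₂e, Matrix.mul_fin_three, Matrix.mul_fin_three, vecMul_eta]
    funext j
    fin_cases j <;> simp [Matrix.vecHead, Matrix.vecTail, -mul_eq_mul_right_iff, -mul_eq_mul_left_iff] <;>
      first
        | ring1
        | linear_combination ((1/9) * ω ^ 4 + (-1/3) * ω ^ 5 + (4/9) * ω ^ 6 + (-1/3) * ω ^ 7 + (1/9) * ω ^ 8) * hω
        | linear_combination ((-1/3) * ω ^ 2 + (1) * ω ^ 3 + (-1) * ω ^ 4 + (2/9) * ω ^ 5 + (1/3) * ω ^ 6 + (-1/3) * ω ^ 7 + (1/9) * ω ^ 8) * hω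
        | linear_combination ((1/9) * ω ^ 5 + (-2/9) * ω ^ 6 + (1/9) * ω ^ 7) * hω
        | linear_combination (-1 : ℂ) * ((1/9) * ω ^ 4 + (-1/3) * ω ^ 5 + (4/9) * ω ^ 6 + (-1/3) * ω ^ 7 + (1/9) * ω ^ 8) * hω
        | linear_combination (-1 : ℂ) * ((-1/3) * ω ^ 2 + (1) * ω ^ 3 + (-1) * ω ^ 4 + (2/9) * ω ^ 5 + (1/3) * ω ^ 6 + (-1/3) * ω ^ 7 + (1/9) * ω ^ 8) * hω
        | linear_combination (-1 : ℂ) * ((1/9) * ω ^ 5 + (-2/9) * ω ^ 6 + (1/9) * ω ^ 7) * hω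
  rw [hv, plane_smul _ hk2_ne]

lemma good_e2 : Good (plane ![0, 0, 1]) := by
  apply good_of (u₂ * u₃ * u₂) (mul_mem (mul_mem hu₂ hu₃) hu₂)
  have hword : ((u₂ * u₃ * u₂ : (Matrix (Fin 3) (Fin 3) ℂ)ˣ) : Matrix (Fin 3) (Fin 3) ℂ) = R₂ * R₃ * R₂ := rfl
  have hv : Matrix.vecMul ![1, 0, 0] ((u₂ * u₃ * u₂ : (Matrix (Fin 3) (Fin 3) ℂ)ˣ) : Matrix (Fin 3) (Fin 3) ℂ)
      = ((ω ^ 2 - ω) ^ 2 / 3) • ![0, 0, 1] := by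
    rw [hword, hR₂e, hR₃e, Matrix.mul_fin_three, Matrix.mul_fin_three, vecMul_eta]
    funext j
    fin_cases j <;> simp [Matrix.vecHead, Matrix.vecTail, -mul_eq_mul_right_iff, -mul_eq_mul_left_iff] <;>
      first
        | ring1
        | linear_combination ((1/9) * ω ^ 4 + (-1/3) * ω ^ 5 + (4/9) * ω ^ 6 + (-1/3) * ω ^ 7 + (1/9) * ω ^ 8) * hω
        | linear_combination ((-1/3) * ω ^ 2 + (1) * ω ^ 3 + (-1) * ω ^ 4 + (2/9) * ω ^ 5 + (1/3) * ω ^ 6 + (-1/3) * ω ^ 7 + (1/9) * ω ^ 8) * hω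
        | linear_combination ((1/9) * ω ^ 5 + (-2/9) * ω ^ 6 + (1/9) * ω ^ 7) * hω
        | linear_combination (-1 : ℂ) * ((1/9) * ω ^ 4 + (-1/3) * ω ^ 5 + (4/9) * ω ^ 6 + (-1/3) * ω ^ 7 + (1/9) * ω ^ 8) * hω
        | linear_combination (-1 : ℂ) * ((-1/3) * ω ^ 2 + (1) * ω ^ 3 + (-1) * ω ^ 4 + (2/9) * ω ^ 5 + (1/3) * ω ^ 6 + (-1/3) * ω ^ 7 + (1/9) * ω ^ 8) * hω
        | linear_combination (-1 : ℂ) * ((1/9) * ω ^ 5 + (-2/9) * ω ^ 6 + (1/9) * ω ^ 7) * hω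
  rw [hv, plane_smul _ hk2_ne]

lemma good_00 : Good (plane ![1, 1, 1]) := by
  apply good_of (u₂ * u₁ * u₃) (mul_mem (mul_mem hu₂ hu₁) hu₃)
  have hword : ((u₂ * u₁ * u₃ : (Matrix (Fin 3) (Fin 3) ℂ)ˣ) : Matrix (Fin 3) (Fin 3) ℂ) = R₂ * R₁ * R₃ := rfl
  have hv : Matrix.vecMul ![1, 0, 0] ((u₂ * u₁ * u₃ : (Matrix (Fin 3) (Fin 3) ℂ)ˣ) : Matrix (Fin 3) (Fin 3) ℂ)
      = ((ω ^ 2 - ω) / 3 * ω) • ![1, 1, 1] := by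
    rw [hword, hR₁e, hR₂e, hR₃e, Matrix.mul_fin_three, Matrix.mul_fin_three, vecMul_eta]
    funext j
    fin_cases j <;> simp [Matrix.vecHead, Matrix.vecTail, -mul_eq_mul_right_iff, -mul_eq_mul_left_iff] <;>
      first
        | ring1
        | linear_combination ((1/3) * ω ^ 2 + (-2/3) * ω ^ 3 + (1/3) * ω ^ 4) * hω
        | linear_combination ((1/3) * ω ^ 4 + (-2/3) * ω ^ 5 + (1/3) * ω ^ 6) * hω
        | linear_combination (-1 : ℂ) * ((1/3) * ω ^ 2 + (-2/3) * ω ^ 3 + (1/3) * ω ^ 4) * hω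
        | linear_combination (-1 : ℂ) * ((1/3) * ω ^ 4 + (-2/3) * ω ^ 5 + (1/3) * ω ^ 6) * hω
  rw [hv, plane_smul _ hk_ne]

lemma good_01 : Good (plane ![1, 1, ω]) := by
  apply good_of (u₂ * u₃) (mul_mem hu₂ hu₃)
  have hword : ((u₂ * u₃ : (Matrix (Fin 3) (Fin 3) ℂ)ˣ) : Matrix (Fin 3) (Fin 3) ℂ) = R₂ * R₃ := rfl
  have hv : Matrix.vecMul ![1, 0, 0] ((u₂ * u₃ : (Matrix (Fin 3) (Fin 3) ℂ)ˣ) : Matrix (Fin 3) (Fin 3) ℂ)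
      = ((ω ^ 2 - ω) / 3 * ω) • ![1, 1, ω] := by
    rw [hword, hR₂e, hR₃e, Matrix.mul_fin_three, vecMul_eta]
    funext j
    fin_cases j <;> simp [Matrix.vecHead, Matrix.vecTail, -mul_eq_mul_right_iff, -mul_eq_mul_left_iff] <;>
      first
        | ring1
        | linear_combination ((1/3) * ω ^ 2 + (-2/3) * ω ^ 3 + (1/3) * ω ^ 4) * hω
        | linear_combination ((1/3) * ω ^ 4 + (-2/3) * ω ^ 5 + (1/3) * ω ^ 6) * hω
        | linear_combination (-1 : ℂ) * ((1/3) * ω ^ 2 + (-2/3) * ω ^ 3 + (1/3) * ω ^ 4) * hω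
        | linear_combination (-1 : ℂ) * ((1/3) * ω ^ 4 + (-2/3) * ω ^ 5 + (1/3) * ω ^ 6) * hω
  rw [hv, plane_smul _ hk_ne]

lemma good_02 : Good (plane ![1, 1, ω ^ 2]) := by
  apply good_of (u₂ * u₁ * u₁ * u₃) (mul_mem (mul_mem (mul_mem hu₂ hu₁) hu₁) hu₃)
  have hword : ((u₂ * u₁ * u₁ * u₃ : (Matrix (Fin 3) (Fin 3) ℂ)ˣ) : Matrix (Fin 3) (Fin 3) ℂ) = R₂ * R₁ * R₁ * R₃ := rfl
  have hv : Matrix.vecMul ![1, 0, 0] ((u₂ * u₁ * u₁ * u₃ : (Matrix (Fin 3) (Fin 3) ℂ)ˣ) : Matrix (Fin 3) (Fin 3) ℂ)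
      = ((ω ^ 2 - ω) / 3 * ω) • ![1, 1, ω ^ 2] := by
    rw [hword, hR₁e, hR₂e, hR₃e, Matrix.mul_fin_three, Matrix.mul_fin_three, Matrix.mul_fin_three, vecMul_eta]
    funext j
    fin_cases j <;> simp [Matrix.vecHead, Matrix.vecTail, -mul_eq_mul_right_iff, -mul_eq_mul_left_iff] <;>
      first
        | ring1
        | linear_combination ((1/3) * ω ^ 2 + (-2/3) * ω ^ 3 + (1/3) * ω ^ 4) * hω
        | linear_combination ((1/3) * ω ^ 4 + (-2/3) * ω ^ 5 + (1/3) * ω ^ 6) * hω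
        | linear_combination (-1 : ℂ) * ((1/3) * ω ^ 2 + (-2/3) * ω ^ 3 + (1/3) * ω ^ 4) * hω
        | linear_combination (-1 : ℂ) * ((1/3) * ω ^ 4 + (-2/3) * ω ^ 5 + (1/3) * ω ^ 6) * hω
  rw [hv, plane_smul _ hk_ne]

lemma good_10 : Good (plane ![1, ω, 1]) := by
  apply good_of (u₂ * u₁) (mul_mem hu₂ hu₁)
  have hword : ((u₂ * u₁ : (Matrix (Fin 3) (Fin 3) ℂ)ˣ) : Matrix (Fin 3) (Fin 3) ℂ) = R₂ * R₁ := rfl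
  have hv : Matrix.vecMul ![1, 0, 0] ((u₂ * u₁ : (Matrix (Fin 3) (Fin 3) ℂ)ˣ) : Matrix (Fin 3) (Fin 3) ℂ)
      = ((ω ^ 2 - ω) / 3 * ω) • ![1, ω, 1] := by
    rw [hword, hR₁e, hR₂e, Matrix.mul_fin_three, vecMul_eta]
    funext j
    fin_cases j <;> simp [Matrix.vecHead, Matrix.vecTail, -mul_eq_mul_right_iff, -mul_eq_mul_left_iff] <;>
      first
        | ring1
        | linear_combination ((1/3) * ω ^ 2 + (-2/3) * ω ^ 3 + (1/3) * ω ^ 4) * hω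
        | linear_combination ((1/3) * ω ^ 4 + (-2/3) * ω ^ 5 + (1/3) * ω ^ 6) * hω
        | linear_combination (-1 : ℂ) * ((1/3) * ω ^ 2 + (-2/3) * ω ^ 3 + (1/3) * ω ^ 4) * hω
        | linear_combination (-1 : ℂ) * ((1/3) * ω ^ 4 + (-2/3) * ω ^ 5 + (1/3) * ω ^ 6) * hω
  rw [hv, plane_smul _ hk_ne]

lemma good_11 : Good (plane ![1, ω, ω]) := by
  apply good_of (u₂) hu₂
  have hword : ((u₂ : (Matrix (Fin 3) (Fin 3) ℂ)ˣ) : Matrix (Fin 3) (Fin 3) ℂ) = R₂ := rfl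
  have hv : Matrix.vecMul ![1, 0, 0] ((u₂ : (Matrix (Fin 3) (Fin 3) ℂ)ˣ) : Matrix (Fin 3) (Fin 3) ℂ)
      = ((ω ^ 2 - ω) / 3 * ω) • ![1, ω, ω] := by
    rw [hword, hR₂e, vecMul_eta]
    funext j
    fin_cases j <;> simp [Matrix.vecHead, Matrix.vecTail, -mul_eq_mul_right_iff, -mul_eq_mul_left_iff] <;>
      first
        | ring1
        | linear_combination ((1/3) * ω ^ 2 + (-2/3) * ω ^ 3 + (1/3) * ω ^ 4) * hω
        | linear_combination ((1/3) * ω ^ 4 + (-2/3) * ω ^ 5 + (1/3) * ω ^ 6) * hω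
        | linear_combination (-1 : ℂ) * ((1/3) * ω ^ 2 + (-2/3) * ω ^ 3 + (1/3) * ω ^ 4) * hω
        | linear_combination (-1 : ℂ) * ((1/3) * ω ^ 4 + (-2/3) * ω ^ 5 + (1/3) * ω ^ 6) * hω
  rw [hv, plane_smul _ hk_ne]

lemma good_12 : Good (plane ![1, ω, ω ^ 2]) := by
  apply good_of (u₂ * u₁ * u₁) (mul_mem (mul_mem hu₂ hu₁) hu₁)
  have hword : ((u₂ * u₁ * u₁ : (Matrix (Fin 3) (Fin 3) ℂ)ˣ) : Matrix (Fin 3) (Fin 3) ℂ) = R₂ * R₁ * R₁ := rfl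
  have hv : Matrix.vecMul ![1, 0, 0] ((u₂ * u₁ * u₁ : (Matrix (Fin 3) (Fin 3) ℂ)ˣ) : Matrix (Fin 3) (Fin 3) ℂ)
      = ((ω ^ 2 - ω) / 3 * ω) • ![1, ω, ω ^ 2] := by
    rw [hword, hR₁e, hR₂e, Matrix.mul_fin_three, Matrix.mul_fin_three, vecMul_eta]
    funext j
    fin_cases j <;> simp [Matrix.vecHead, Matrix.vecTail, -mul_eq_mul_right_iff, -mul_eq_mul_left_iff] <;>
      first
        | ring1
        | linear_combination ((1/3) * ω ^ 2 + (-2/3) * ω ^ 3 + (1/3) * ω ^ 4) * hω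
        | linear_combination ((1/3) * ω ^ 4 + (-2/3) * ω ^ 5 + (1/3) * ω ^ 6) * hω
        | linear_combination (-1 : ℂ) * ((1/3) * ω ^ 2 + (-2/3) * ω ^ 3 + (1/3) * ω ^ 4) * hω
        | linear_combination (-1 : ℂ) * ((1/3) * ω ^ 4 + (-2/3) * ω ^ 5 + (1/3) * ω ^ 6) * hω
  rw [hv, plane_smul _ hk_ne]

lemma good_20 : Good (plane ![1, ω ^ 2, 1]) := by
  apply good_of (u₂ * u₁ * u₃ * u₃) (mul_mem (mul_mem (mul_mem hu₂ hu₁) hu₃) hu₃)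
  have hword : ((u₂ * u₁ * u₃ * u₃ : (Matrix (Fin 3) (Fin 3) ℂ)ˣ) : Matrix (Fin 3) (Fin 3) ℂ) = R₂ * R₁ * R₃ * R₃ := rfl
  have hv : Matrix.vecMul ![1, 0, 0] ((u₂ * u₁ * u₃ * u₃ : (Matrix (Fin 3) (Fin 3) ℂ)ˣ) : Matrix (Fin 3) (Fin 3) ℂ)
      = ((ω ^ 2 - ω) / 3 * ω) • ![1, ω ^ 2, 1] := by
    rw [hword, hR₁e, hR₂e, hR₃e, Matrix.mul_fin_three, Matrix.mul_fin_three, Matrix.mul_fin_three, vecMul_eta]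
    funext j
    fin_cases j <;> simp [Matrix.vecHead, Matrix.vecTail, -mul_eq_mul_right_iff, -mul_eq_mul_left_iff] <;>
      first
        | ring1
        | linear_combination ((1/3) * ω ^ 2 + (-2/3) * ω ^ 3 + (1/3) * ω ^ 4) * hω
        | linear_combination ((1/3) * ω ^ 4 + (-2/3) * ω ^ 5 + (1/3) * ω ^ 6) * hω
        | linear_combination (-1 : ℂ) * ((1/3) * ω ^ 2 + (-2/3) * ω ^ 3 + (1/3) * ω ^ 4) * hω
        | linear_combination (-1 : ℂ) * ((1/3) * ω ^ 4 + (-2/3) * ω ^ 5 + (1/3) * ω ^ 6) * hω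
  rw [hv, plane_smul _ hk_ne]

lemma good_21 : Good (plane ![1, ω ^ 2, ω]) := by
  apply good_of (u₂ * u₃ * u₃) (mul_mem (mul_mem hu₂ hu₃) hu₃)
  have hword : ((u₂ * u₃ * u₃ : (Matrix (Fin 3) (Fin 3) ℂ)ˣ) : Matrix (Fin 3) (Fin 3) ℂ) = R₂ * R₃ * R₃ := rfl
  have hv : Matrix.vecMul ![1, 0, 0] ((u₂ * u₃ * u₃ : (Matrix (Fin 3) (Fin 3) ℂ)ˣ) : Matrix (Fin 3) (Fin 3) ℂ)
      = ((ω ^ 2 - ω) / 3 * ω) • ![1, ω ^ 2, ω] := by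
    rw [hword, hR₂e, hR₃e, Matrix.mul_fin_three, Matrix.mul_fin_three, vecMul_eta]
    funext j
    fin_cases j <;> simp [Matrix.vecHead, Matrix.vecTail, -mul_eq_mul_right_iff, -mul_eq_mul_left_iff] <;>
      first
        | ring1
        | linear_combination ((1/3) * ω ^ 2 + (-2/3) * ω ^ 3 + (1/3) * ω ^ 4) * hω
        | linear_combination ((1/3) * ω ^ 4 + (-2/3) * ω ^ 5 + (1/3) * ω ^ 6) * hω
        | linear_combination (-1 : ℂ) * ((1/3) * ω ^ 2 + (-2/3) * ω ^ 3 + (1/3) * ω ^ 4) * hω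
        | linear_combination (-1 : ℂ) * ((1/3) * ω ^ 4 + (-2/3) * ω ^ 5 + (1/3) * ω ^ 6) * hω
  rw [hv, plane_smul _ hk_ne]

lemma good_22 : Good (plane ![1, ω ^ 2, ω ^ 2]) := by
  apply good_of (u₂ * u₁ * u₁ * u₃ * u₃) (mul_mem (mul_mem (mul_mem (mul_mem hu₂ hu₁) hu₁) hu₃) hu₃)
  have hword : ((u₂ * u₁ * u₁ * u₃ * u₃ : (Matrix (Fin 3) (Fin 3) ℂ)ˣ) : Matrix (Fin 3) (Fin 3) ℂ) = R₂ * R₁ * R₁ * R₃ * R₃ := rfl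
  have hv : Matrix.vecMul ![1, 0, 0] ((u₂ * u₁ * u₁ * u₃ * u₃ : (Matrix (Fin 3) (Fin 3) ℂ)ˣ) : Matrix (Fin 3) (Fin 3) ℂ)
      = ((ω ^ 2 - ω) / 3 * ω) • ![1, ω ^ 2, ω ^ 2] := by
    rw [hword, hR₁e, hR₂e, hR₃e, Matrix.mul_fin_three, Matrix.mul_fin_three, Matrix.mul_fin_three, Matrix.mul_fin_three, vecMul_eta]
    funext j
    fin_cases j <;> simp [Matrix.vecHead, Matrix.vecTail, -mul_eq_mul_right_iff, -mul_eq_mul_left_iff] <;>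
      first
        | ring1
        | linear_combination ((1/3) * ω ^ 2 + (-2/3) * ω ^ 3 + (1/3) * ω ^ 4) * hω
        | linear_combination ((1/3) * ω ^ 4 + (-2/3) * ω ^ 5 + (1/3) * ω ^ 6) * hω
        | linear_combination (-1 : ℂ) * ((1/3) * ω ^ 2 + (-2/3) * ω ^ 3 + (1/3) * ω ^ 4) * hω
        | linear_combination (-1 : ℂ) * ((1/3) * ω ^ 4 + (-2/3) * ω ^ 5 + (1/3) * ω ^ 6) * hω
  rw [hv, plane_smul _ hk_ne]


lemma good_all : ∀ W ∈ ReflPlanes, Good W := by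
  rintro W (rfl | rfl | rfl | ⟨ξ, ξ', hξ, hξ', rfl⟩)
  · exact good_base
  · exact good_e1
  · exact good_e2
  · rcases cube_roots ξ hξ with rfl | rfl | rfl <;>
      rcases cube_roots ξ' hξ' with rfl | rfl | rfl
    · exact good_00
    · exact good_01
    · exact good_02
    · exact good_10
    · exact good_11
    · exact good_12
    · exact good_20
    · exact good_21
    · exact good_22

/-- Lemma 5.1 of the paper: `G₂₅` acts transitively on its 12 reflection planes. -/
theorem G25_transitive_on_reflection_planes :
    ∀ W₁ ∈ ReflPlanes, ∀ W₂ ∈ ReflPlanes, ∃ g ∈ G25,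
      Submodule.map (Matrix.toLin' (g : Matrix (Fin 3) (Fin 3) ℂ)) W₁ = W₂ := by
  intro W₁ hW₁ W₂ hW₂
  obtain ⟨g₁, hg₁, he₁⟩ := good_all W₁ hW₁
  obtain ⟨g₂, hg₂, he₂⟩ := good_all W₂ hW₂
  refine ⟨g₂ * g₁⁻¹, mul_mem hg₂ (inv_mem hg₁), ?_⟩
  have hg : g₂ * g₁⁻¹ * g₁ = g₂ := by group
  rw [← he₁, ← Submodule.map_comp, ← Matrix.toLin'_mul, ← Units.val_mul, hg]
  exact he₂

end Stmt12
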